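/- Let S be an m×k matrix over 𝔽₂ with rows S¹,…,Sᵐ ∈ 𝔽₂ᵏ. Then S satisfies condition (A2) for K if and only if the following condition (A2*) holds: for every nonzero vector a ∈ 𝔽₂ᵏ there exists a minimal non-simplex ω(a) ∈ N(K) such that ⟨a, Sⁱ⟩ = 1 in 𝔽₂ for every i ∈ ω(a), where ⟨·,·⟩ denotes the standard bilinear form on 𝔽₂ᵏ. -/
import Mathlib


/-- `K` is an abstract simplicial complex on the vertex set `[m]`:
it contains the empty set and is closed under taking subsets. -/
def IsSimplicialComplex (m : ℕ) (K : Set (Finset (Fin m))) : Prop :=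
  ∅ ∈ K ∧ ∀ σ ∈ K, ∀ τ ⊆ σ, τ ∈ K

/-- `ω` is a minimal non-simplex of `K`: `ω ∉ K` but every proper subset of `ω` is in `K`. -/
def MinimalNonSimplex (m : ℕ) (K : Set (Finset (Fin m))) (ω : Finset (Fin m)) : Prop :=
  ω ∉ K ∧ ∀ τ ⊂ ω, τ ∈ K

/-- Condition (A): for every simplex `σ ∈ K` the rows `{Sⁱ : i ∉ σ}`
generate `ℤᵏ` as an abelian group. -/
def CondA (m k : ℕ) (K : Set (Finset (Fin m))) (S : Matrix (Fin m) (Fin k) ℤ) : Prop :=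
  ∀ σ ∈ K, Submodule.span ℤ ((fun i => S i) '' {i : Fin m | i ∉ σ}) = ⊤

/-- Condition (A2): for every simplex `σ ∈ K` the rows `{Sⁱ : i ∉ σ}` span `𝔽₂ᵏ`. -/
def CondA2 (m k : ℕ) (K : Set (Finset (Fin m))) (S : Matrix (Fin m) (Fin k) (ZMod 2)) : Prop :=
  ∀ σ ∈ K, Submodule.span (ZMod 2) ((fun i => S i) '' {i : Fin m | i ∉ σ}) = ⊤

/-- Pairing with `a` as a linear functional. -/
private def pairFun (k : ℕ) (a : Fin k → ZMod 2) :
    (Fin k → ZMod 2) →ₗ[ZMod 2] ZMod 2 where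
  toFun v := ∑ j, a j * v j
  map_add' x y := by simp [mul_add, Finset.sum_add_distrib]
  map_smul' c x := by simp [Finset.mul_sum, mul_left_comm]

private lemma span_top_iff {k : ℕ} (s : Set (Fin k → ZMod 2)) :
    Submodule.span (ZMod 2) s = ⊤ ↔
      ∀ a : Fin k → ZMod 2, (∀ v ∈ s, ∑ j, a j * v j = 0) → a = 0 := by
  constructor
  · intro h a ha
    have hker : Submodule.span (ZMod 2) s ≤ LinearMap.ker (pairFun k a) := by
      rw [Submodule.span_le]
      intro v hv
      simpa [pairFun] using ha v hv
    rw [h, top_le_iff, LinearMap.ker_eq_top] at hker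
    funext j
    have := congrFun (congrArg (fun f => f.toFun) hker) (fun i => if j = i then 1 else 0)
    simpa [pairFun, Finset.sum_ite_eq] using this
  · intro h
    by_contra hne
    obtain ⟨f, hf0, hf⟩ := Submodule.exists_dual_map_eq_bot_of_lt_top
      (p := Submodule.span (ZMod 2) s) (lt_top_iff_ne_top.mpr hne) inferInstance
    set a : Fin k → ZMod 2 := fun j => f (fun i => if j = i then 1 else 0) with ha
    have hfa : ∀ v, f v = ∑ j, a j * v j := by
      intro v
      rw [LinearMap.pi_apply_eq_sum_univ f v]
      exact Finset.sum_congr rfl fun j _ => by simp [ha, mul_comm, eq_comm]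
    have haz : a = 0 := by
      apply h
      intro v hv
      rw [← hfa]
      have : f v ∈ Submodule.map f (Submodule.span (ZMod 2) s) :=
        ⟨v, Submodule.subset_span hv, rfl⟩
      rw [hf] at this
      simpa using this
    apply hf0
    ext v
    simp [hfa, haz]

private lemma exists_minimal {m : ℕ} (K : Set (Finset (Fin m))) :
    ∀ T : Finset (Fin m), T ∉ K → ∃ ω ⊆ T, ω ∉ K ∧ ∀ τ ⊂ ω, τ ∈ K := by
  intro T
  induction T using Finset.strongInduction with
  | _ T ih =>
    intro hT
    by_cases h : ∀ τ ⊂ T, τ ∈ K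
    · exact ⟨T, subset_rfl, hT, h⟩
    · push_neg at h
      obtain ⟨τ, hτT, hτ⟩ := h
      obtain ⟨ω, hω1, hω2, hω3⟩ := ih τ hτT hτ
      exact ⟨ω, hω1.trans hτT.subset, hω2, hω3⟩

private lemma zmod2_ne_one {x : ZMod 2} (h : x ≠ 1) : x = 0 := by
  revert h; revert x; decide

theorem stmt_8 (m k : ℕ) (K : Set (Finset (Fin m))) (hK : IsSimplicialComplex m K)
    (S : Matrix (Fin m) (Fin k) (ZMod 2)) :
    CondA2 m k K S ↔
      ∀ a : Fin k → ZMod 2, a ≠ 0 →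
        ∃ ω : Finset (Fin m), MinimalNonSimplex m K ω ∧
          ∀ i ∈ ω, (∑ j, a j * S i j) = 1 := by
  constructor
  · intro hA2 a ha
    set T : Finset (Fin m) := Finset.univ.filter (fun i => ∑ j, a j * S i j = 1) with hT
    have hTK : T ∉ K := by
      intro hTK
      apply ha
      have := hA2 T hTK
      rw [span_top_iff] at this
      apply this
      rintro v ⟨i, hi, rfl⟩
      simp only [Set.mem_setOf_eq, hT, Finset.mem_filter, Finset.mem_univ, true_and] at hi
      exact zmod2_ne_one hi
    obtain ⟨ω, hωT, hω1, hω2⟩ := exists_minimal K T hTK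
    refine ⟨ω, ⟨hω1, hω2⟩, fun i hi => ?_⟩
    have := hωT hi
    simpa [hT] using this
  · intro h σ hσ
    rw [span_top_iff]
    intro a ha
    by_contra haz
    obtain ⟨ω, ⟨hω1, _⟩, hω2⟩ := h a haz
    apply hω1
    refine hK.2 σ hσ ω (fun i hi => ?_)
    by_contra hiσ
    have := ha (S i) ⟨i, hiσ, rfl⟩
    rw [hω2 i hi] at this
    exact one_ne_zero this
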